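/- For fixed p ∈ (0, 1/2), the function q ↦ H_b(q * p) − H_b(q) is nonincreasing on [0, 1/2], attaining its maximum value H_b(p) at q = 0 and its minimum value 0 at q = 1/2. -/

import Mathlib

/-- Binary convolution (star operator): `q * p = q(1-p) + (1-q)p`. -/
def starOp (q p : ℝ) : ℝ := q * (1 - p) + (1 - q) * p

/-- The binary entropy function `H_b(x) = -x log₂ x - (1-x) log₂ (1-x)`. -/
noncomputable def binEnt (x : ℝ) : ℝ :=
  -(x * Real.logb 2 x) - (1 - x) * Real.logb 2 (1 - x)

lemma binEnt_eq (x : ℝ) : binEnt x = Real.binEntropy x / Real.log 2 := by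
  unfold binEnt Real.binEntropy Real.logb
  rw [Real.log_inv, Real.log_inv]
  ring

/-- For fixed `p ∈ (0, 1/2)`, the map `q ↦ H_b(q*p) − H_b(q)` is nonincreasing on
`[0, 1/2]`, attains its maximum value `H_b(p)` at `q = 0`, and its minimum value `0`
at `q = 1/2`. -/
theorem binEnt_starOp_sub_antitoneOn (p : ℝ) (hp : p ∈ Set.Ioo (0 : ℝ) (1 / 2)) :
    AntitoneOn (fun q => binEnt (starOp q p) - binEnt q) (Set.Icc (0 : ℝ) (1 / 2)) ∧
      binEnt (starOp 0 p) - binEnt 0 = binEnt p ∧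
      binEnt (starOp (1 / 2) p) - binEnt (1 / 2) = 0 := by
  obtain ⟨hp0, hp2⟩ := hp
  refine ⟨?_, ?_, ?_⟩
  · -- antitone
    have hlog2 : (0 : ℝ) < Real.log 2 := Real.log_pos (by norm_num)
    have key : AntitoneOn (fun q => Real.binEntropy (starOp q p) - Real.binEntropy q)
        (Set.Icc (0 : ℝ) (1 / 2)) := by
      have hint : interior (Set.Icc (0 : ℝ) (1 / 2)) = Set.Ioo (0 : ℝ) (1 / 2) :=
        interior_Icc
      apply antitoneOn_of_hasDerivWithinAt_nonpos (f' := fun q =>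
        (1 - 2 * p) * (Real.log (1 - starOp q p) - Real.log (starOp q p))
          - (Real.log (1 - q) - Real.log q)) (convex_Icc _ _)
      · apply Continuous.continuousOn
        have hc : Continuous fun q : ℝ => starOp q p := by
          unfold starOp; fun_prop
        exact (Real.binEntropy_continuous.comp hc).sub Real.binEntropy_continuous
      · intro q hq
        rw [hint] at hq
        obtain ⟨hq0, hq2⟩ := hq
        have hs0 : 0 < starOp q p := by unfold starOp; nlinarith
        have hs1 : starOp q p < 1 := by unfold starOp; nlinarith
        have h1 : HasDerivAt (fun q : ℝ => starOp q p) (1 - 2 * p) q := by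
          have : HasDerivAt (fun q : ℝ => q * (1 - p) + (1 - q) * p)
              (1 * (1 - p) + (0 - 1) * p) q := by
            exact ((hasDerivAt_id q).mul_const (1 - p)).add
              (((hasDerivAt_const q (1:ℝ)).sub (hasDerivAt_id q)).mul_const p)
          exact this.congr_deriv (by ring)
        have h2 : HasDerivAt Real.binEntropy
            (Real.log (1 - starOp q p) - Real.log (starOp q p)) (starOp q p) :=
          Real.hasDerivAt_binEntropy (ne_of_gt hs0) (ne_of_lt hs1)
        have h3 : HasDerivAt Real.binEntropy (Real.log (1 - q) - Real.log q) q :=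
          Real.hasDerivAt_binEntropy (ne_of_gt hq0) (by linarith)
        have := ((h2.comp q h1).sub h3)
        have heq : (fun q => Real.binEntropy (starOp q p) - Real.binEntropy q)
            = (Real.binEntropy ∘ fun q : ℝ => starOp q p) - Real.binEntropy := rfl
        rw [heq]
        have := this.hasDerivWithinAt (s := interior (Set.Icc (0:ℝ) (1/2)))
        exact this.congr_deriv (by ring)
      · intro q hq
        rw [hint] at hq
        obtain ⟨hq0, hq2⟩ := hq
        set s := starOp q p with hs
        have hs0 : 0 < s := by unfold starOp at hs; rw [hs]; nlinarith
        have hsq : q < s := by unfold starOp at hs; rw [hs]; nlinarith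
        have hs2 : s < 1 / 2 := by unfold starOp at hs; rw [hs]; nlinarith
        have hLs : 0 ≤ Real.log (1 - s) - Real.log s := by
          have := Real.log_le_log hs0 (by linarith : s ≤ 1 - s)
          linarith
        have hLsq : Real.log (1 - s) - Real.log s
            ≤ Real.log (1 - q) - Real.log q := by
          have h1 := Real.log_le_log (by linarith : (0:ℝ) < 1 - s)
            (by linarith : 1 - s ≤ 1 - q)
          have h2 := Real.log_le_log hq0 (le_of_lt hsq)
          linarith
        have h12p : 1 - 2 * p < 1 := by linarith
        nlinarith [mul_le_of_le_one_left hLs (le_of_lt h12p)]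
    intro x hx y hy hxy
    have h := key hx hy hxy
    simp only at h
    simp only [binEnt_eq]
    rw [div_sub_div_same, div_sub_div_same, div_le_div_iff_of_pos_right hlog2]
    linarith [h]
  · have h1 : starOp 0 p = p := by unfold starOp; ring
    have h2 : binEnt 0 = 0 := by simp [binEnt]
    rw [h1, h2]; ring
  · have h1 : starOp (1 / 2) p = 1 / 2 := by unfold starOp; ring
    rw [h1]; ring
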